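/- (Reduction to the 6-dimensional second heavenly equation.) Let Ξ : ℝ⁶ → ℝ be a smooth function of (x³,x⁴,y¹,y²,y³,y⁴) and define Θ : ℝ⁸ → ℝ by Θ(x¹,…,x⁴,y¹,…,y⁴) = x¹y² + Ξ(x³,x⁴,y¹,y²,y³,y⁴). Then Θ satisfies the 4+4-dimensional TED equation at a point if and only if Ξ satisfies the 6-dimensional second heavenly equation Ξ_{x³y⁴} − Ξ_{x⁴y³} = Ξ_{x³y¹} Ξ_{x⁴y²} − Ξ_{x³y²} Ξ_{x⁴y¹} at the corresponding point. -/

import Mathlib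

noncomputable section

/-- Partial derivative of `f : ℝⁿ → ℝ` in the `i`-th coordinate direction. -/
def pd {n : ℕ} (i : Fin n) (f : (Fin n → ℝ) → ℝ) : (Fin n → ℝ) → ℝ :=
  fun p => fderiv ℝ f p (Pi.single i 1)

/-- `∂/∂x^i` on functions of `(x¹,…,x⁴,y¹,…,y⁴) ∈ ℝ⁸`. -/
def px (i : Fin 4) (f : (Fin 8 → ℝ) → ℝ) : (Fin 8 → ℝ) → ℝ :=
  pd ⟨i.val, by omega⟩ f

/-- `∂/∂y^i` on functions of `(x¹,…,x⁴,y¹,…,y⁴) ∈ ℝ⁸`. -/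
def py (i : Fin 4) (f : (Fin 8 → ℝ) → ℝ) : (Fin 8 → ℝ) → ℝ :=
  pd ⟨i.val + 4, by omega⟩ f

/-- `ω_{ik} = Θ_{x^i y^k} − Θ_{x^k y^i}`. -/
def omg (Θ : (Fin 8 → ℝ) → ℝ) (i k : Fin 4) : (Fin 8 → ℝ) → ℝ :=
  fun p => px i (py k Θ) p - px k (py i Θ) p

/-- The left-hand side of the 4+4-dimensional TED equation. -/
def tedLHS (Θ : (Fin 8 → ℝ) → ℝ) (p : Fin 8 → ℝ) : ℝ :=
  omg Θ 0 1 p * omg Θ 2 3 p + omg Θ 1 2 p * omg Θ 0 3 p + omg Θ 2 0 p * omg Θ 1 3 p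

/-- The function `Θ(x¹,…,x⁴,y¹,…,y⁴) = x¹y² + Ξ(x³,x⁴,y¹,y²,y³,y⁴)`; the variables of `Ξ`
are ordered `(x³,x⁴,y¹,y²,y³,y⁴)`. -/
def ThetaOf (Ξ : (Fin 6 → ℝ) → ℝ) : (Fin 8 → ℝ) → ℝ :=
  fun p => p 0 * p 5 + Ξ (fun j => p (![2, 3, 4, 5, 6, 7] j))

/-- The linear substitution `(x¹,…,x⁴,y¹,…,y⁴) ↦ (x³,x⁴,y¹,y²,y³,y⁴)`. -/
def Lmap : (Fin 8 → ℝ) →L[ℝ] (Fin 6 → ℝ) :=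
  ContinuousLinearMap.pi (fun j => ContinuousLinearMap.proj (![2, 3, 4, 5, 6, 7] j))

lemma Lmap_apply (p : Fin 8 → ℝ) : Lmap p = fun j => p (![2, 3, 4, 5, 6, 7] j) := rfl

section Aux

variable {Ξ : (Fin 6 → ℝ) → ℝ}

lemma fderiv_ThetaOf (hΞ : ContDiff ℝ (⊤ : ℕ∞) Ξ) (q w : Fin 8 → ℝ) :
    fderiv ℝ (ThetaOf Ξ) q w
      = w 0 * q 5 + q 0 * w 5 + fderiv ℝ Ξ (Lmap q) (Lmap w) := by
  have h1 : HasFDerivAt (fun p : Fin 8 → ℝ => p 0 * p 5)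
      (q 0 • (ContinuousLinearMap.proj 5 : (Fin 8 → ℝ) →L[ℝ] ℝ)
        + q 5 • (ContinuousLinearMap.proj 0 : (Fin 8 → ℝ) →L[ℝ] ℝ)) q :=
    ((ContinuousLinearMap.proj (R := ℝ) (φ := fun _ : Fin 8 => ℝ) 0).hasFDerivAt).mul
      ((ContinuousLinearMap.proj 5 : (Fin 8 → ℝ) →L[ℝ] ℝ).hasFDerivAt)
  have h2 : HasFDerivAt (fun p : Fin 8 → ℝ => Ξ (Lmap p))
      ((fderiv ℝ Ξ (Lmap q)).comp Lmap) q :=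
    ((hΞ.differentiable (by norm_num) (Lmap q)).hasFDerivAt).comp q Lmap.hasFDerivAt
  have h : HasFDerivAt (ThetaOf Ξ) _ q := h1.add h2
  rw [h.fderiv]
  simp
  ring

lemma fderiv2_ThetaOf (hΞ : ContDiff ℝ (⊤ : ℕ∞) Ξ) (p v w : Fin 8 → ℝ) :
    fderiv ℝ (fun q => fderiv ℝ (ThetaOf Ξ) q w) p v
      = v 0 * w 5 + w 0 * v 5
        + fderiv ℝ (fderiv ℝ Ξ) (Lmap p) (Lmap v) (Lmap w) := by
  have hF : ContDiff ℝ (⊤ : ℕ∞) (fderiv ℝ Ξ) :=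
    hΞ.fderiv_right (m := (⊤ : ℕ∞)) (by exact_mod_cast le_rfl)
  have hfun : (fun q => fderiv ℝ (ThetaOf Ξ) q w)
      = fun q => w 0 * q 5 + q 0 * w 5 + (fderiv ℝ Ξ (Lmap q)) (Lmap w) :=
    funext fun q => fderiv_ThetaOf hΞ q w
  rw [hfun]
  have h1 : HasFDerivAt (fun q : Fin 8 → ℝ => w 0 * q 5)
      (w 0 • (ContinuousLinearMap.proj 5 : (Fin 8 → ℝ) →L[ℝ] ℝ)) p :=
    ((ContinuousLinearMap.proj 5 : (Fin 8 → ℝ) →L[ℝ] ℝ).hasFDerivAt).const_mul (w 0)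
  have h2 : HasFDerivAt (fun q : Fin 8 → ℝ => q 0 * w 5)
      (w 5 • (ContinuousLinearMap.proj 0 : (Fin 8 → ℝ) →L[ℝ] ℝ)) p := by
    simpa using
      ((ContinuousLinearMap.proj 0 : (Fin 8 → ℝ) →L[ℝ] ℝ).hasFDerivAt (x := p)).mul_const (w 5)
  have hc : HasFDerivAt (fun r : Fin 6 → ℝ => (fderiv ℝ Ξ r) (Lmap w))
      ((fderiv ℝ Ξ (Lmap p)).comp 0
        + (fderiv ℝ (fderiv ℝ Ξ) (Lmap p)).flip (Lmap w)) (Lmap p) :=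
    ((hF.differentiable (by norm_num) (Lmap p)).hasFDerivAt).clm_apply (hasFDerivAt_const _ _)
  have h3 : HasFDerivAt (fun q : Fin 8 → ℝ => (fderiv ℝ Ξ (Lmap q)) (Lmap w))
      (((fderiv ℝ Ξ (Lmap p)).comp 0
        + (fderiv ℝ (fderiv ℝ Ξ) (Lmap p)).flip (Lmap w)).comp Lmap) p :=
    hc.comp p Lmap.hasFDerivAt
  have h : HasFDerivAt (fun q : Fin 8 → ℝ => w 0 * q 5 + q 0 * w 5 + (fderiv ℝ Ξ (Lmap q)) (Lmap w)) _ p :=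
    (h1.add h2).add h3
  rw [h.fderiv]
  simp
  ring

lemma pd2_ThetaOf (hΞ : ContDiff ℝ (⊤ : ℕ∞) Ξ) (a b : Fin 8) (p : Fin 8 → ℝ) :
    pd a (pd b (ThetaOf Ξ)) p
      = (Pi.single a 1 : Fin 8 → ℝ) 0 * (Pi.single b 1 : Fin 8 → ℝ) 5
        + (Pi.single b 1 : Fin 8 → ℝ) 0 * (Pi.single a 1 : Fin 8 → ℝ) 5
        + fderiv ℝ (fderiv ℝ Ξ) (Lmap p) (Lmap (Pi.single a 1)) (Lmap (Pi.single b 1)) := by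
  show fderiv ℝ (fun q => fderiv ℝ (ThetaOf Ξ) q (Pi.single b 1)) p (Pi.single a 1) = _
  exact fderiv2_ThetaOf hΞ p (Pi.single a 1) (Pi.single b 1)

lemma pd2_Xi (hΞ : ContDiff ℝ (⊤ : ℕ∞) Ξ) (a b : Fin 6) (q : Fin 6 → ℝ) :
    pd a (pd b Ξ) q = fderiv ℝ (fderiv ℝ Ξ) q (Pi.single a 1) (Pi.single b 1) := by
  have hF : ContDiff ℝ (⊤ : ℕ∞) (fderiv ℝ Ξ) :=
    hΞ.fderiv_right (m := (⊤ : ℕ∞)) (by exact_mod_cast le_rfl)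
  have hc : HasFDerivAt (fun r : Fin 6 → ℝ => (fderiv ℝ Ξ r) (Pi.single b 1))
      ((fderiv ℝ Ξ q).comp 0 + (fderiv ℝ (fderiv ℝ Ξ) q).flip (Pi.single b 1)) q :=
    ((hF.differentiable (by norm_num) q).hasFDerivAt).clm_apply (hasFDerivAt_const _ _)
  show fderiv ℝ (fun r => fderiv ℝ Ξ r (Pi.single b 1)) q (Pi.single a 1) = _
  rw [hc.fderiv]
  simp

end Aux

lemma Lmap_single0 : Lmap (Pi.single (0 : Fin 8) (1:ℝ)) = 0 := by
  ext j; fin_cases j <;> simp [Lmap_apply, Pi.single_apply] <;> decide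
lemma Lmap_single1 : Lmap (Pi.single (1 : Fin 8) (1:ℝ)) = 0 := by
  ext j; fin_cases j <;> simp [Lmap_apply, Pi.single_apply] <;> decide
lemma Lmap_single2 : Lmap (Pi.single (2 : Fin 8) (1:ℝ)) = Pi.single (0 : Fin 6) 1 := by
  ext j; fin_cases j <;> simp [Lmap_apply, Pi.single_apply] <;> decide
lemma Lmap_single3 : Lmap (Pi.single (3 : Fin 8) (1:ℝ)) = Pi.single (1 : Fin 6) 1 := by
  ext j; fin_cases j <;> simp [Lmap_apply, Pi.single_apply] <;> decide
lemma Lmap_single4 : Lmap (Pi.single (4 : Fin 8) (1:ℝ)) = Pi.single (2 : Fin 6) 1 := by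
  ext j; fin_cases j <;> simp [Lmap_apply, Pi.single_apply] <;> decide
lemma Lmap_single5 : Lmap (Pi.single (5 : Fin 8) (1:ℝ)) = Pi.single (3 : Fin 6) 1 := by
  ext j; fin_cases j <;> simp [Lmap_apply, Pi.single_apply] <;> decide
lemma Lmap_single6 : Lmap (Pi.single (6 : Fin 8) (1:ℝ)) = Pi.single (4 : Fin 6) 1 := by
  ext j; fin_cases j <;> simp [Lmap_apply, Pi.single_apply] <;> decide
lemma Lmap_single7 : Lmap (Pi.single (7 : Fin 8) (1:ℝ)) = Pi.single (5 : Fin 6) 1 := by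
  ext j; fin_cases j <;> simp [Lmap_apply, Pi.single_apply] <;> decide

set_option maxHeartbeats 1000000 in
theorem stmt13 (Ξ : (Fin 6 → ℝ) → ℝ) (hΞ : ContDiff ℝ (⊤ : ℕ∞) Ξ) :
    ∀ p : Fin 8 → ℝ,
      (tedLHS (ThetaOf Ξ) p = 0 ↔
        (pd 0 (pd 5 Ξ) (fun j => p (![2, 3, 4, 5, 6, 7] j)) -
            pd 1 (pd 4 Ξ) (fun j => p (![2, 3, 4, 5, 6, 7] j)) =
          pd 0 (pd 2 Ξ) (fun j => p (![2, 3, 4, 5, 6, 7] j)) *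
              pd 1 (pd 3 Ξ) (fun j => p (![2, 3, 4, 5, 6, 7] j)) -
            pd 0 (pd 3 Ξ) (fun j => p (![2, 3, 4, 5, 6, 7] j)) *
              pd 1 (pd 2 Ξ) (fun j => p (![2, 3, 4, 5, 6, 7] j)))) := by
  intro p
  set Θ := ThetaOf Ξ with hΘ
  have hq : (fun j => p (![2, 3, 4, 5, 6, 7] j)) = Lmap p := rfl
  have e : tedLHS Θ p =
      (pd 0 (pd 5 Θ) p - pd 1 (pd 4 Θ) p) * (pd 2 (pd 7 Θ) p - pd 3 (pd 6 Θ) p)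
      + (pd 1 (pd 6 Θ) p - pd 2 (pd 5 Θ) p) * (pd 0 (pd 7 Θ) p - pd 3 (pd 4 Θ) p)
      + (pd 2 (pd 4 Θ) p - pd 0 (pd 6 Θ) p) * (pd 1 (pd 7 Θ) p - pd 3 (pd 5 Θ) p) := rfl
  rw [hq, e, hΘ]
  rw [pd2_ThetaOf hΞ 0 5, pd2_ThetaOf hΞ 1 4, pd2_ThetaOf hΞ 2 7, pd2_ThetaOf hΞ 3 6,
      pd2_ThetaOf hΞ 1 6, pd2_ThetaOf hΞ 2 5, pd2_ThetaOf hΞ 0 7, pd2_ThetaOf hΞ 3 4,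
      pd2_ThetaOf hΞ 2 4, pd2_ThetaOf hΞ 0 6, pd2_ThetaOf hΞ 1 7, pd2_ThetaOf hΞ 3 5,
      pd2_Xi hΞ 0 5, pd2_Xi hΞ 1 4, pd2_Xi hΞ 0 2, pd2_Xi hΞ 1 3, pd2_Xi hΞ 0 3,
      pd2_Xi hΞ 1 2]
  rw [Lmap_single0, Lmap_single1, Lmap_single2, Lmap_single3, Lmap_single4, Lmap_single5,
      Lmap_single6, Lmap_single7]
  simp (config := { decide := true }) only [Pi.single_apply, map_zero,
    ContinuousLinearMap.zero_apply]
  norm_num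
  set M := fderiv ℝ (fderiv ℝ Ξ) (Lmap p)
  constructor <;> intro h <;> nlinarith [h]
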